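/- arXiv:1710.04978 — 2 statements merged into one kernel-verified Lean document; each statement's English description precedes it below -/
import Mathlib

section
/- In a semitrace, if two distinct values a and b of [n] are in descending order in the permutation α_i on some row i (the larger appearing before the smaller), then there exists a row j with i ≤ j ≤ k such that a and b lie in the same block of α_j with respect to μ_j. -/
/-- The identity permutation of `[n] = {1,…,n}` in one-line notation. -/
def idList (n : ℕ) : List ℕ := (List.range n).map (· + 1)

/-- `l` is (the one-line notation of) a permutation of `[n] = {1,…,n}`. -/
def IsPermOf (l : List ℕ) (n : ℕ) : Prop := l.Perm (idList n)

/-- One pass of the pop-stack machine: `stack` holds the current content of the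
stack (top first); a pop empties the whole stack onto the output. -/
def popAux : List ℕ → List ℕ → List ℕ
  | stack, [] => stack
  | stack, x :: xs =>
    match stack with
    | [] => popAux [x] xs
    | a :: _ => if x < a then popAux (x :: stack) xs else stack ++ popAux [x] xs

/-- The pop-stack sorting operator `P`, acting on one-line notations. -/
def popPass (l : List ℕ) : List ℕ := popAux [] l

/-- An operation sequence for permutations of `[n]`: a word of length `n+1` over
`{a, d}` (here `true` = `a`, `false` = `d`) beginning and ending with `a`. -/
def OpSeq (μ : List Bool) (n : ℕ) : Prop :=
  μ.length = n + 1 ∧ μ.head? = some true ∧ μ.getLast? = some true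

/-- Helper for blockwise reversal: `cur` is the current block, already reversed;
the `i`-th letter of the operation sequence precedes the `i`-th entry of the
permutation, and a letter `a = true` flushes the current block and starts a new one. -/
def revAux : List ℕ → List ℕ → List Bool → List ℕ
  | cur, [], _ => cur
  | cur, x :: xs, [] => revAux (x :: cur) xs []
  | cur, x :: xs, c :: cs =>
    if c then cur ++ revAux [x] xs cs else revAux (x :: cur) xs cs

/-- Blockwise reversal `rev(l, μ)` of `l` according to the operation sequence `μ`. -/
def rev (l : List ℕ) (μ : List Bool) : List ℕ := revAux [] l μ

/-- Tail of the ascent/descent word of a list (letters `c_2 … c_{n+1}`). -/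
def ascTail : List ℕ → List Bool
  | [] => []
  | [_] => [true]
  | x :: y :: rest => decide (x < y) :: ascTail (y :: rest)

/-- The ascent/descent word `w(π) = c_1 c_2 … c_{n+1}` of `π` (with `true` = `a`). -/
def ascWord (l : List ℕ) : List Bool := true :: ascTail l

/-- `L` is the decomposition of `π` into its maximal decreasing runs:
the blocks concatenate to `π`, each block is nonempty and strictly decreasing,
and at each boundary between consecutive blocks there is an ascent (maximality). -/
def RunDecomp (π : List ℕ) (L : List (List ℕ)) : Prop :=
  π = L.flatten ∧ (∀ b ∈ L, b ≠ []) ∧ (∀ b ∈ L, b.Chain' (· > ·)) ∧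
    L.Chain' (fun b c => ∀ x ∈ b.getLast?, ∀ y ∈ c.head?, x < y)

/-- The one-line notation of a permutation of `Fin n`, with values shifted to `{1,…,n}`. -/
def permToList {n : ℕ} (σ : Equiv.Perm (Fin n)) : List ℕ :=
  List.ofFn fun i => (σ i : ℕ) + 1

/-- The number of permutations of `[n]` sortable by `k` passes through a pop-stack. -/
def countSortable (k n : ℕ) : ℕ :=
  (Finset.univ.filter (fun σ : Equiv.Perm (Fin n) => popPass^[k] (permToList σ) = idList n)).card

/-- A semitrace of order `k` and length `n`: permutations `α 1, …, α (k+1)` of `[n]`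
with `α (k+1)` the identity, and operation sequences `μ 1, …, μ k`, such that
`α (i+1)` is the blockwise reversal of `α i` according to `μ i`. -/
def IsSemitrace (n k : ℕ) (α : ℕ → List ℕ) (μ : ℕ → List Bool) : Prop :=
  (∀ i, 1 ≤ i → i ≤ k + 1 → IsPermOf (α i) n) ∧
  (∀ i, 1 ≤ i → i ≤ k → OpSeq (μ i) n) ∧
  α (k + 1) = idList n ∧
  (∀ i, 1 ≤ i → i ≤ k → α (i + 1) = rev (α i) (μ i))

/-- `a` and `b` lie in the same block of `σ` with respect to the operation sequence `μ`:
they occupy positions `p ≤ q` with no bar (letter `a = true`) strictly between them. -/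
def SameBlock (σ : List ℕ) (μ : List Bool) (a b : ℕ) : Prop :=
  ∃ p q : ℕ, p ≤ q ∧ q < σ.length ∧
    ((σ.getD p 0 = a ∧ σ.getD q 0 = b) ∨ (σ.getD p 0 = b ∧ σ.getD q 0 = a)) ∧
    ∀ r, p < r → r ≤ q → μ.getD r false = false

/-- The number of descents of a list. -/
def descentCount (l : List ℕ) : ℕ :=
  ((List.range (l.length - 1)).filter (fun i => l.getD (i + 1) 0 < l.getD i 0)).length

/-- The layered permutation with the given block sizes, starting with value `start + 1`:
each block consists of consecutive values arranged in decreasing order. -/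
def layeredList : ℕ → List ℕ → List ℕ
  | _, [] => []
  | start, s :: rest =>
      ((List.range s).map (fun j => start + s - j)) ++ layeredList (start + s) rest

lemma revAux_perm : ∀ (l : List ℕ) (cur : List ℕ) (μ : List Bool),
    (revAux cur l μ).Perm (cur ++ l)
  | [], cur, μ => by simp [revAux]
  | x :: xs, cur, [] => by
    have h1 := revAux_perm xs (x :: cur) []
    have h2 : ((x :: cur) ++ xs).Perm (cur ++ x :: xs) := List.perm_middle.symm
    exact (show revAux cur (x::xs) [] = revAux (x::cur) xs [] from rfl) ▸ h1.trans h2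
  | x :: xs, cur, c :: cs => by
    by_cases hc : c
    · subst hc
      show (cur ++ revAux [x] xs cs).Perm (cur ++ x :: xs)
      exact ((revAux_perm xs [x] cs).append_left cur)
    · simp only [Bool.not_eq_true] at hc; subst hc
      show (revAux (x :: cur) xs cs).Perm (cur ++ x :: xs)
      exact (revAux_perm xs (x :: cur) cs).trans List.perm_middle.symm

lemma revAux_split : ∀ (l1 : List ℕ) (μ1 : List Bool) (cur l2 : List ℕ) (μ2 : List Bool),
    l1.length = μ1.length → μ2.head? = some true →
    revAux cur (l1 ++ l2) (μ1 ++ μ2) = revAux cur l1 μ1 ++ revAux [] l2 μ2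
  | [], [], cur, l2, μ2, _, h2 => by
    cases l2 with
    | nil => simp [revAux]
    | cons x xs =>
      cases μ2 with
      | nil => simp at h2
      | cons c cs =>
        simp at h2; subst h2
        simp [revAux]
  | [], c :: cs, cur, l2, μ2, h1, h2 => by simp at h1
  | x :: xs, [], cur, l2, μ2, h1, h2 => by simp at h1
  | x :: xs, c :: cs, cur, l2, μ2, h1, h2 => by
    simp only [List.length_cons, Nat.succ.injEq] at h1
    by_cases hc : c
    · subst hc
      show cur ++ revAux [x] (xs ++ l2) (cs ++ μ2) = (cur ++ revAux [x] xs cs) ++ revAux [] l2 μ2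
      rw [revAux_split xs cs [x] l2 μ2 h1 h2, List.append_assoc]
    · simp only [Bool.not_eq_true] at hc; subst hc
      show revAux (x :: cur) (xs ++ l2) (cs ++ μ2) = revAux (x :: cur) xs cs ++ revAux [] l2 μ2
      exact revAux_split xs cs (x :: cur) l2 μ2 h1 h2

lemma rev_preserves_order (l : List ℕ) (μ : List Bool) (hnd : l.Nodup) (x y : ℕ)
    (hx : x ∈ l) (hy : y ∈ l) (hpq : l.idxOf x < l.idxOf y)
    (r : ℕ) (hr1 : l.idxOf x < r) (hr2 : r ≤ l.idxOf y) (hbar : μ.getD r false = true) :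
    (rev l μ).idxOf x < (rev l μ).idxOf y := by
  have hq : l.idxOf y < l.length := List.idxOf_lt_length_iff.2 hy
  have hrlen : r < μ.length := by
    by_contra h
    rw [List.getD_eq_default _ _ (le_of_not_gt h)] at hbar
    exact Bool.false_ne_true hbar
  have hhead : (μ.drop r).head? = some true := by
    rw [List.head?_drop, List.getElem?_eq_getElem hrlen]
    rw [List.getD_eq_getElem _ _ hrlen] at hbar
    exact congrArg some hbar
  have hsplit : rev l μ = revAux [] (l.take r) (μ.take r) ++ revAux [] (l.drop r) (μ.drop r) := by
    have := revAux_split (l.take r) (μ.take r) [] (l.drop r) (μ.drop r)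
      (by rw [List.length_take, List.length_take]; omega) hhead
    rw [List.take_append_drop, List.take_append_drop] at this
    exact this
  have hxmem : x ∈ l.take r := by
    have : l.idxOf x < l.length := List.idxOf_lt_length_iff.2 hx
    rw [← List.getElem_idxOf this]
    exact List.mem_take_iff_getElem.2 ⟨l.idxOf x, by omega, rfl⟩
  have hymem : y ∈ l.drop r := by
    have h3 : l.idxOf y - r < (l.drop r).length := by rw [List.length_drop]; omega
    have h4 : (l.drop r)[l.idxOf y - r] = y := by
      rw [List.getElem_drop]
      have h5 : r + (l.idxOf y - r) = l.idxOf y := by omega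
      simp_rw [h5]
      exact List.getElem_idxOf hq
    exact h4 ▸ List.getElem_mem h3
  have p1 : (revAux [] (l.take r) (μ.take r)).Perm (l.take r) := by
    simpa using revAux_perm (l.take r) [] (μ.take r)
  have p2 : (revAux [] (l.drop r) (μ.drop r)).Perm (l.drop r) := by
    simpa using revAux_perm (l.drop r) [] (μ.drop r)
  have hxA : x ∈ revAux [] (l.take r) (μ.take r) := p1.mem_iff.2 hxmem
  have hyB : y ∈ revAux [] (l.drop r) (μ.drop r) := p2.mem_iff.2 hymem
  have hynA : y ∉ revAux [] (l.take r) (μ.take r) := by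
    intro hyA
    have hyA' : y ∈ l.take r := p1.mem_iff.1 hyA
    exact (List.disjoint_take_drop hnd le_rfl) hyA' hymem
  rw [hsplit, List.idxOf_append_of_mem hxA, List.idxOf_append_of_notMem hynA]
  have : x ∈ revAux [] (l.take r) (μ.take r) := hxA
  have := List.idxOf_lt_length_iff.2 hxA
  omega

lemma idList_nodup (n : ℕ) : (idList n).Nodup :=
  (List.nodup_range (n := n)).map (fun _ _ h => by omega)

lemma idList_indexOf {n m : ℕ} (hm : m ∈ idList n) : (idList n).idxOf m = m - 1 := by
  obtain ⟨t, ht, rfl⟩ := List.mem_map.1 hm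
  have ht2 : t < n := by simpa using ht
  have h1 : t < (idList n).length := by simp [idList]; omega
  have h2 : (idList n)[t] = t + 1 := by simp [idList]
  rw [← h2, (idList_nodup n).idxOf_getElem]
  omega

/-- If two distinct values are in descending order in row `i` of a semitrace
(the larger appearing before the smaller), then on some row `j` with
`i ≤ j ≤ k` they lie in the same block. -/
theorem descending_sameBlock (n k : ℕ) (α : ℕ → List ℕ) (μ : ℕ → List Bool)
    (hT : IsSemitrace n k α μ) (i : ℕ) (hi1 : 1 ≤ i) (hik : i ≤ k + 1)
    (a b : ℕ) (hab : a ≠ b) (ha : a ∈ α i) (hb : b ∈ α i)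
    (hdesc : (α i).idxOf (max a b) < (α i).idxOf (min a b)) :
    ∃ j, i ≤ j ∧ j ≤ k ∧ SameBlock (α j) (μ j) a b := by
  obtain ⟨hperm, hops, hid, hstep⟩ := hT
  by_contra hcon
  push_neg at hcon
  set x := max a b with hxdef
  set y := min a b with hydef
  have hyx : y < x := by rcases Nat.lt_or_ge a b with h | h <;> simp [hxdef, hydef] <;> omega
  have haid : a ∈ idList n := (hperm i hi1 hik).mem_iff.1 ha
  have hbid : b ∈ idList n := (hperm i hi1 hik).mem_iff.1 hb
  have hxid : x ∈ idList n := by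
    rcases max_choice a b with h | h <;> rw [← hxdef] at h <;> rw [h] <;> assumption
  have hyid : y ∈ idList n := by
    rcases min_choice a b with h | h <;> rw [← hydef] at h <;> rw [h] <;> assumption
  have key : ∀ j, i ≤ j → j ≤ k + 1 → (α j).idxOf x < (α j).idxOf y := by
    intro j hj
    induction j, hj using Nat.le_induction with
    | base => intro _; exact hdesc
    | succ j hij IH =>
      intro hjk1
      have hjk : j ≤ k := by omega
      have hj1 : 1 ≤ j := le_trans hi1 hij
      have IH' := IH (by omega)
      have hpj : IsPermOf (α j) n := hperm j hj1 (by omega)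
      have hnd : (α j).Nodup := hpj.nodup_iff.2 (idList_nodup n)
      have hxm : x ∈ α j := hpj.mem_iff.2 hxid
      have hym : y ∈ α j := hpj.mem_iff.2 hyid
      have hq : (α j).idxOf y < (α j).length := List.idxOf_lt_length_iff.2 hym
      have hp : (α j).idxOf x < (α j).length := List.idxOf_lt_length_iff.2 hxm
      have hgetp : (α j).getD ((α j).idxOf x) 0 = x := by
        rw [List.getD_eq_getElem _ _ hp]; exact List.getElem_idxOf hp
      have hgetq : (α j).getD ((α j).idxOf y) 0 = y := by
        rw [List.getD_eq_getElem _ _ hq]; exact List.getElem_idxOf hq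
      have hnsb := hcon j hij hjk
      rw [SameBlock] at hnsb
      push_neg at hnsb
      have hvals : ((α j).getD ((α j).idxOf x) 0 = a ∧ (α j).getD ((α j).idxOf y) 0 = b) ∨
          ((α j).getD ((α j).idxOf x) 0 = b ∧ (α j).getD ((α j).idxOf y) 0 = a) := by
        rcases Nat.le_total a b with h | h
        · right
          constructor
          · rw [hgetp, hxdef]; omega
          · rw [hgetq, hydef]; omega
        · left
          constructor
          · rw [hgetp, hxdef]; omega
          · rw [hgetq, hydef]; omega
      obtain ⟨r, hr1, hr2, hr3⟩ :=
        hnsb ((α j).idxOf x) ((α j).idxOf y) (le_of_lt IH') hq hvals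
      have hbar : (μ j).getD r false = true := by
        revert hr3; cases ((μ j).getD r false) <;> simp
      rw [hstep j hj1 hjk]
      exact rev_preserves_order (α j) (μ j) hnd x y hxm hym IH' r hr1 hr2 hbar
  have hfin := key (k + 1) hik le_rfl
  rw [hid, idList_indexOf hxid, idList_indexOf hyid] at hfin
  have hy1 : 1 ≤ y := by
    obtain ⟨t, -, h⟩ := List.mem_map.1 hyid; omega
  omega
end

section
/- If π is a permutation of [n] and P(π) = identity, then π avoids the patterns 231 and 312: there are no indices i < j < l with π(l) < π(i) < π(j), and no indices i < j < l with π(j) < π(l) < π(i). -/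
lemma popAux_perm (xs : List ℕ) : ∀ stack, (popAux stack xs).Perm (stack ++ xs) := by
  induction xs with
  | nil => intro stack; simp [popAux]
  | cons x xs ih =>
    intro stack
    match stack with
    | [] => simpa [popAux] using ih [x]
    | a :: s =>
      rw [popAux]
      split
      · exact (ih _).trans List.perm_middle.symm
      · exact (ih [x]).append_left (a :: s)

lemma popAux_split (xs : List ℕ) : ∀ (stack : List ℕ) (a : ℕ),
    ∃ run rest, xs = run ++ rest ∧
      popAux (a :: stack) xs = run.reverse ++ (a :: stack) ++ popAux [] rest ∧
      (a :: run).Chain' (· > ·) := by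
  induction xs with
  | nil => intro stack a; exact ⟨[], [], rfl, by simp [popAux], List.isChain_singleton a⟩
  | cons x xs ih =>
    intro stack a
    by_cases hx : x < a
    · obtain ⟨run, rest, h1, h2, h3⟩ := ih (a :: stack) x
      refine ⟨x :: run, rest, by simp [h1], ?_, List.isChain_cons_cons.mpr ⟨hx, h3⟩⟩
      rw [popAux]
      simp [hx, h2]
    · refine ⟨[], x :: xs, rfl, ?_, List.isChain_singleton a⟩
      conv_lhs => rw [popAux]
      rw [if_neg hx]
      simp [popAux]

lemma sublist_block (B R : List ℕ)
    (a b c : ℕ) (hsub : [a, b, c].Sublist (B ++ R)) :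
    ([a, b, c].Sublist R) ∨ ([a, b, c].Sublist B) ∨ (a ∈ B ∧ c ∈ R) := by
  rw [List.sublist_append_iff] at hsub
  obtain ⟨l1, l2, heq, h1, h2⟩ := hsub
  rcases l1 with _ | ⟨p, _ | ⟨q, _ | ⟨r, _ | ⟨s, t⟩⟩⟩⟩
  · simp only [List.nil_append] at heq
    exact Or.inl (heq ▸ h2)
  · obtain ⟨rfl, rfl⟩ : p = a ∧ l2 = [b, c] := by simpa using heq.symm
    exact Or.inr (Or.inr ⟨h1.subset (by simp), h2.subset (by simp)⟩)
  · obtain ⟨rfl, rfl, rfl⟩ : p = a ∧ q = b ∧ l2 = [c] := by simpa using heq.symm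
    exact Or.inr (Or.inr ⟨h1.subset (by simp), h2.subset (by simp)⟩)
  · obtain ⟨rfl, rfl, rfl, rfl⟩ : p = a ∧ q = b ∧ r = c ∧ l2 = [] := by simpa using heq.symm
    exact Or.inr (Or.inl h1)
  · simp at heq

lemma no_pat : ∀ (N : ℕ) (π : List ℕ), π.length ≤ N → (popPass π).Pairwise (· < ·) →
    (¬ ∃ a b c, [a, b, c].Sublist π ∧ c < a ∧ a < b) ∧
    (¬ ∃ a b c, [a, b, c].Sublist π ∧ b < c ∧ c < a) := by
  intro N
  induction N with
  | zero =>
    intro π hl _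
    have : π = [] := List.eq_nil_of_length_eq_zero (Nat.le_zero.mp hl)
    subst this
    constructor <;> rintro ⟨a, b, c, hsub, -⟩ <;> simpa using hsub.length_le
  | succ N ihN =>
    intro π hl hsort
    match π with
    | [] =>
      constructor <;> rintro ⟨a, b, c, hsub, -⟩ <;> simpa using hsub.length_le
    | x :: xs =>
      obtain ⟨run, rest, hxs, hpop, hchain⟩ := popAux_split xs [] x
      have hpp : popPass (x :: xs) = run.reverse ++ (x :: popPass rest) := by
        show popAux [] (x :: xs) = _
        rw [popAux, hpop]
        simp [popPass]
      rw [hpp, List.pairwise_append] at hsort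
      obtain ⟨-, hsort2, -⟩ := hsort
      rw [List.pairwise_cons] at hsort2
      obtain ⟨hxlt', hsort_rest⟩ := hsort2
      have hmemperm : ∀ y ∈ rest, y ∈ popPass rest := by
        intro y hy
        have := (popAux_perm rest []).mem_iff (a := y)
        simpa [popPass, this] using hy
      have hxlt : ∀ y ∈ rest, x < y := fun y hy => hxlt' y (hmemperm y hy)
      have hlen : rest.length ≤ N := by
        have := congrArg List.length hxs
        simp at this hl
        omega
      obtain ⟨hR1, hR2⟩ := ihN rest hlen hsort_rest
      have hBpair : (x :: run).Pairwise (· > ·) := List.isChain_iff_pairwise.mp hchain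
      have hrunx : ∀ p ∈ run, p < x := (List.pairwise_cons.mp hBpair).1
      have hblock : ∀ p ∈ x :: run, ∀ y ∈ rest, p < y := by
        intro p hp y hy
        rcases List.mem_cons.mp hp with rfl | hp
        · exact hxlt y hy
        · exact lt_trans (hrunx p hp) (hxlt y hy)
      have hπ : x :: xs = (x :: run) ++ rest := by rw [hxs]; rfl
      constructor
      · rintro ⟨a, b, c, hsub, h1, h2⟩
        rw [hπ] at hsub
        rcases sublist_block _ _ _ _ _ hsub with h | h | ⟨ha, hc⟩
        · exact hR1 ⟨a, b, c, h, h1, h2⟩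
        · have : a > b := (List.pairwise_cons.mp (List.Pairwise.sublist h hBpair)).1 b (by simp)
          omega
        · have := hblock a ha c hc; omega
      · rintro ⟨a, b, c, hsub, h1, h2⟩
        rw [hπ] at hsub
        rcases sublist_block _ _ _ _ _ hsub with h | h | ⟨ha, hc⟩
        · exact hR2 ⟨a, b, c, h, h1, h2⟩
        · have : b > c := by
            have hp := List.Pairwise.sublist h hBpair
            rw [List.pairwise_cons] at hp
            exact (List.pairwise_cons.mp hp.2).1 c (by simp)
          omega
        · have := hblock a ha c hc; omega

lemma getD_sublist {π : List ℕ} {i j l : ℕ} (hij : i < j) (hjl : j < l)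
    (hl : l < π.length) :
    [π.getD i 0, π.getD j 0, π.getD l 0].Sublist π := by
  have hi : i < π.length := lt_trans (lt_trans hij hjl) hl
  have hj : j < π.length := lt_trans hjl hl
  rw [List.getD_eq_getElem _ _ hi, List.getD_eq_getElem _ _ hj, List.getD_eq_getElem _ _ hl]
  have hpw : List.Pairwise (fun x1 x2 : Fin π.length => (x1 : ℕ) < x2)
      [⟨i, hi⟩, ⟨j, hj⟩, ⟨l, hl⟩] := by
    simp only [List.pairwise_cons, List.mem_cons]
    refine ⟨?_, ?_, ?_⟩ <;> simp_all <;> omega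
  simpa using List.map_getElem_sublist hpw

lemma idList_pairwise (n : ℕ) : (idList n).Pairwise (· < ·) := by
  refine List.Pairwise.map _ ?_ (List.pairwise_lt_range (n := n))
  intro a b h
  omega

/-- A permutation sorted by one pop-stack pass avoids the patterns `231` and `312`. -/
theorem one_pass_avoids_231_312 (n : ℕ) (π : List ℕ) (h : IsPermOf π n)
    (hs : popPass π = idList n) :
    (¬∃ i j l, i < j ∧ j < l ∧ l < π.length ∧
        π.getD l 0 < π.getD i 0 ∧ π.getD i 0 < π.getD j 0) ∧
    (¬∃ i j l, i < j ∧ j < l ∧ l < π.length ∧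
        π.getD j 0 < π.getD l 0 ∧ π.getD l 0 < π.getD i 0) := by
  have hsorted : (popPass π).Pairwise (· < ·) := hs ▸ idList_pairwise n
  obtain ⟨h1, h2⟩ := no_pat π.length π le_rfl hsorted
  constructor
  · rintro ⟨i, j, l, hij, hjl, hl, ha, hb⟩
    exact h1 ⟨_, _, _, getD_sublist hij hjl hl, ha, hb⟩
  · rintro ⟨i, j, l, hij, hjl, hl, ha, hb⟩
    exact h2 ⟨_, _, _, getD_sublist hij hjl hl, ha, hb⟩
end
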